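/- If a bipartite graph with parts agents and institutions has no safe block among a set D̄ of institutions each having at least one neighbor, then the graph restricted to D̄ admits a matching saturating all institutions of D̄ (every institution in D̄ is matched). -/

import Mathlib

open scoped Classical

variable {N D : Type*} [Fintype N] [Fintype D] [DecidableEq N] [DecidableEq D]

/-- Neighborhood of a set of institutions: agents adjacent to some institution in `T`. -/
noncomputable def nbr (adj : D → N → Prop) (T : Finset D) : Finset N :=
  Finset.univ.filter fun a => ∃ d ∈ T, adj d a

/-- `T` is equal-acceptable: exactly as many neighbors as institutions. -/
def equalAcc (adj : D → N → Prop) (T : Finset D) : Prop :=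
  (nbr adj T).card = T.card

/-- A safe block: a nonempty equal-acceptable set with no nonempty proper
equal-acceptable subset. -/
def safeBlock (adj : D → N → Prop) (S : Finset D) : Prop :=
  S.Nonempty ∧ equalAcc adj S ∧ ∀ S' ⊂ S, S'.Nonempty → ¬ equalAcc adj S'

/-- `M` is a matching of the bipartite graph restricted to institutions `Dbar`. -/
def isMatching (adj : D → N → Prop) (Dbar : Finset D) (M : Finset (D × N)) : Prop :=
  (∀ p ∈ M, p.1 ∈ Dbar ∧ adj p.1 p.2) ∧
  (∀ p ∈ M, ∀ q ∈ M, p.1 = q.1 → p = q) ∧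
  (∀ p ∈ M, ∀ q ∈ M, p.2 = q.2 → p = q)

lemma nbr_mono (adj : D → N → Prop) {T T' : Finset D} (h : T ⊆ T') :
    nbr adj T ⊆ nbr adj T' := by
  intro a ha
  simp only [nbr, Finset.mem_filter, Finset.mem_univ, true_and] at ha ⊢
  obtain ⟨d, hd, hda⟩ := ha
  exact ⟨d, h hd, hda⟩

/-- Hall's condition holds. -/
lemma hall_cond (adj : D → N → Prop) (Dbar : Finset D)
    (hns : ∀ S ⊆ Dbar, ¬ safeBlock adj S)
    (hnb : ∀ d ∈ Dbar, ∃ a, adj d a) :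
    ∀ T ⊆ Dbar, T.card ≤ (nbr adj T).card := by
  by_contra hc
  push_neg at hc
  -- the family of "bad" sets
  set P : Finset D → Prop := fun T => T ⊆ Dbar ∧ (nbr adj T).card < T.card with hP
  have hPne : (Dbar.powerset.filter P).Nonempty := by
    obtain ⟨T, hT, hlt⟩ := hc
    exact ⟨T, by simp [P, Finset.mem_powerset, hT, hlt]⟩
  obtain ⟨S, hSmem, hSmin⟩ := Finset.exists_min_image _ Finset.card hPne
  simp only [Finset.mem_filter, Finset.mem_powerset] at hSmem
  obtain ⟨hSDbar, hSsub, hSlt⟩ := hSmem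
  have hSne : S.Nonempty := by
    rw [← Finset.card_pos]
    omega
  -- minimality: every strict subset in P-or-less fails; first show singletons have ≥ 1 nbr
  have hsingle : ∀ d ∈ Dbar, 1 ≤ (nbr adj {d}).card := by
    intro d hd
    obtain ⟨a, ha⟩ := hnb d hd
    have : a ∈ nbr adj {d} := by simp [nbr, ha]
    exact Finset.card_pos.mpr ⟨a, this⟩
  -- every nonempty T ⊆ S with (nbr T).card ≤ T.card  must have card ≥ S.card
  have hkey : ∀ T ⊆ S, T.Nonempty → (nbr adj T).card ≤ T.card → S.card ≤ T.card := by
    intro T hTS hTne hTle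
    rcases lt_or_eq_of_le hTle with hlt | heq
    · have : T ∈ Dbar.powerset.filter P := by
        simp only [Finset.mem_filter, Finset.mem_powerset]
        exact ⟨hTS.trans hSsub, hTS.trans hSsub, hlt⟩
      exact hSmin T this
    · -- T is equal-acceptable
      by_contra hlt'
      push_neg at hlt'
      -- then among equal-acceptable subsets of T, a minimal-card one is a safe block
      set Q : Finset D → Prop := fun U => U ⊆ T ∧ U.Nonempty ∧ equalAcc adj U with hQ
      have hQne : (T.powerset.filter Q).Nonempty :=
        ⟨T, Finset.mem_filter.mpr ⟨Finset.mem_powerset.mpr subset_rfl, subset_rfl, hTne, heq⟩⟩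
      obtain ⟨U, hUmem, hUmin⟩ := Finset.exists_min_image _ Finset.card hQne
      simp only [Finset.mem_filter, Finset.mem_powerset] at hUmem
      obtain ⟨hUT, hUT', hUne, hUeq⟩ := hUmem
      refine hns U (hUT.trans (hTS.trans hSsub)) ⟨hUne, hUeq, ?_⟩
      intro U' hU' hU'ne hU'eq
      have : U' ∈ T.powerset.filter Q := by
        simp only [Finset.mem_filter, Finset.mem_powerset]
        exact ⟨hU'.subset.trans hUT, hU'.subset.trans hUT, hU'ne, hU'eq⟩
      have h1 := hUmin U' this
      have h2 := Finset.card_lt_card hU'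
      omega
  -- now derive a contradiction: remove an element of S
  obtain ⟨d, hd⟩ := hSne
  have hcard1 : 1 ≤ (nbr adj {d}).card := hsingle d (hSsub hd)
  have hsub1 : nbr adj {d} ⊆ nbr adj S :=
    nbr_mono adj (Finset.singleton_subset_iff.mpr hd)
  have h1le : 1 ≤ (nbr adj S).card := le_trans hcard1 (Finset.card_le_card hsub1)
  have hS2 : 2 ≤ S.card := by omega
  have hT'ne : (S.erase d).Nonempty := by
    rw [← Finset.card_pos, Finset.card_erase_of_mem hd]
    omega
  have hT'le : (nbr adj (S.erase d)).card ≤ (S.erase d).card := by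
    have h1 : (nbr adj (S.erase d)).card ≤ (nbr adj S).card :=
      Finset.card_le_card (nbr_mono adj (Finset.erase_subset _ _))
    rw [Finset.card_erase_of_mem hd]
    omega
  have := hkey (S.erase d) (Finset.erase_subset _ _) hT'ne hT'le
  rw [Finset.card_erase_of_mem hd] at this
  omega

/-- If there is no safe block among institutions  and every institution of 
has a neighbor, then there is a matching saturating all of . -/
theorem no_safe_block_saturating_matching (adj : D → N → Prop) (Dbar : Finset D)
    (hns : ∀ S ⊆ Dbar, ¬ safeBlock adj S)
    (hnb : ∀ d ∈ Dbar, ∃ a, adj d a) :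
    ∃ M : Finset (D × N), isMatching adj Dbar M ∧ ∀ d ∈ Dbar, ∃ a, (d, a) ∈ M := by
  have hall := hall_cond adj Dbar hns hnb
  set t : {d // d ∈ Dbar} → Finset N := fun d => nbr adj {d.1} with ht
  have hbi : ∀ s : Finset {d // d ∈ Dbar}, s.biUnion t = nbr adj (s.image Subtype.val) := by
    intro s
    ext a
    simp only [Finset.mem_biUnion, ht, nbr, Finset.mem_filter, Finset.mem_univ, true_and,
      Finset.mem_image, Finset.mem_singleton]
    constructor
    · rintro ⟨d, hds, e, rfl, hea⟩
      exact ⟨d.1, ⟨d, hds, rfl⟩, hea⟩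
    · rintro ⟨e, ⟨d, hds, rfl⟩, hea⟩
      exact ⟨d, hds, d.1, rfl, hea⟩
  have hH : ∀ s : Finset {d // d ∈ Dbar}, s.card ≤ (s.biUnion t).card := by
    intro s
    rw [hbi]
    have hcard : (s.image Subtype.val).card = s.card :=
      Finset.card_image_of_injective s Subtype.val_injective
    have hsub : s.image Subtype.val ⊆ Dbar := by
      intro x hx
      simp only [Finset.mem_image] at hx
      obtain ⟨d, _, rfl⟩ := hx
      exact d.2
    have := hall _ hsub
    omega
  obtain ⟨f, hfinj, hf⟩ := (Finset.all_card_le_biUnion_card_iff_exists_injective t).mp hH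
  refine ⟨Dbar.attach.image fun d => (d.1, f d), ⟨?_, ?_, ?_⟩, ?_⟩
  · rintro ⟨d, a⟩ hp
    simp only [Finset.mem_image, Finset.mem_attach, true_and, Prod.mk.injEq] at hp
    obtain ⟨e, he1, he2⟩ := hp
    subst he1; subst he2
    have := hf e
    simp only [ht, nbr, Finset.mem_filter, Finset.mem_univ, true_and,
      Finset.mem_singleton] at this
    obtain ⟨d', rfl, h⟩ := this
    exact ⟨e.2, h⟩
  · rintro ⟨d, a⟩ hp ⟨d', a'⟩ hq h
    simp only at h
    subst h
    simp only [Finset.mem_image, Finset.mem_attach, true_and, Prod.mk.injEq] at hp hq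
    obtain ⟨e, he1, he2⟩ := hp
    obtain ⟨e', he1', he2'⟩ := hq
    have : e = e' := Subtype.ext (he1.trans he1'.symm)
    subst this
    simp [← he2, ← he2']
  · rintro ⟨d, a⟩ hp ⟨d', a'⟩ hq h
    simp only at h
    subst h
    simp only [Finset.mem_image, Finset.mem_attach, true_and, Prod.mk.injEq] at hp hq
    obtain ⟨e, he1, he2⟩ := hp
    obtain ⟨e', he1', he2'⟩ := hq
    have : e = e' := hfinj (he2.trans he2'.symm)
    subst this
    simp [← he1, ← he1']
  · intro d hd
    refine ⟨f ⟨d, hd⟩, ?_⟩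
    simp only [Finset.mem_image, Finset.mem_attach, true_and, Prod.mk.injEq]
    exact ⟨⟨d, hd⟩, rfl, rfl⟩
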